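/- Let f, g : ℝⁿ → ℝ be convex and differentiable with Lipschitz gradients of constants L(f), L(g), and 0 < μ ≤ min{1/L(f), 1/L(g)}. Consider the FALM iteration: z¹ = x⁰ = y⁰, t₁ = 1; for k ≥ 1, x^k = argmin_x Q_g(x, z^k), y^k = argmin_y Q_f(y, x^k), t_{k+1} = (1+√(1+4t_k²))/2, z^{k+1} = y^k + ((t_k−1)/t_{k+1})(y^k − y^{k−1}). Then F(y^k) − F(x*) ≤ ‖x⁰ − x*‖² / (μ(k+1)²) for all k ≥ 1, where x* minimizes F = f + g. -/

import Mathlib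

open scoped RealInnerProductSpace

variable {E : Type*} [NormedAddCommGroup E] [InnerProductSpace ℝ E] [CompleteSpace E]

lemma line_hasDerivAt (h : E → ℝ) (h' : E → E) (hd : ∀ x, HasGradientAt h (h' x) x)
    (v d : E) (t : ℝ) :
    HasDerivAt (fun s : ℝ => h (v + s • d)) ⟪h' (v + t • d), d⟫ t := by
  have h1 : HasDerivAt (fun s : ℝ => v + s • d) d t := by
    simpa using ((hasDerivAt_id t).smul_const d).const_add v
  have h2 := (hd (v + t • d)).hasFDerivAt.comp_hasDerivAt t h1
  simpa [InnerProductSpace.toDual_apply_apply, Function.comp_def] using h2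

lemma convex_first_order (h : E → ℝ) (h' : E → E)
    (hc : ConvexOn ℝ Set.univ h) (hd : ∀ x, HasGradientAt h (h' x) x)
    (v w : E) : h v + ⟪h' v, w - v⟫ ≤ h w := by
  have hder : HasDerivAt (fun s : ℝ => h (v + s • (w - v))) ⟪h' v, w - v⟫ 0 := by
    simpa using line_hasDerivAt h h' hd v (w - v) 0
  have hslope : ∀ t : ℝ, t ∈ Set.Ioc (0:ℝ) 1 →
      (h (v + t • (w - v)) - h v) / t ≤ h w - h v := by
    intro t ht
    have h2 := hc.2 (Set.mem_univ v) (Set.mem_univ w)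
      (by linarith [ht.2] : (0:ℝ) ≤ 1 - t) (le_of_lt ht.1) (by ring)
    have heq : (1 - t) • v + t • w = v + t • (w - v) := by
      module
    rw [heq] at h2
    have h2' : h (v + t • (w - v)) ≤ (1 - t) * h v + t * h w := by
      simpa [smul_eq_mul] using h2
    rw [div_le_iff₀ ht.1]
    nlinarith [ht.1]
  have htt : Filter.Tendsto (fun t : ℝ => (h (v + t • (w - v)) - h v) / t)
      (nhdsWithin 0 (Set.Ioi 0)) (nhds ⟪h' v, w - v⟫) := by
    have h3 := hasDerivAt_iff_tendsto_slope.mp hder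
    have h4 : Set.Ioi (0:ℝ) ⊆ {(0:ℝ)}ᶜ := fun x hx => ne_of_gt hx
    have h5 := h3.mono_left (nhdsWithin_mono _ h4)
    refine h5.congr (fun t => ?_)
    simp [slope_def_field, div_eq_inv_mul]
  have hle : ⟪h' v, w - v⟫ ≤ h w - h v := by
    refine le_of_tendsto htt ?_
    filter_upwards [Ioc_mem_nhdsGT_of_mem (Set.mem_Ico.mpr ⟨le_refl 0, zero_lt_one⟩)] with t ht
    exact hslope t ht
  linarith

lemma descent_lemma (h : E → ℝ) (h' : E → E) (hd : ∀ x, HasGradientAt h (h' x) x)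
    (L μ : ℝ) (hμ : 0 < μ) (hLμ : L * μ ≤ 1)
    (hlip : ∀ a b, ‖h' a - h' b‖ ≤ L * ‖a - b‖) (u v : E) :
    h u ≤ h v + ⟪h' v, u - v⟫ + ‖u - v‖ ^ 2 / (2 * μ) := by
  set d := u - v with hdd
  set ψ : ℝ → ℝ := fun s => h (v + s • d) - s * ⟪h' v, d⟫ - s ^ 2 / (2 * μ) * ‖d‖ ^ 2 with hψ
  have hψd : ∀ s : ℝ, HasDerivAt ψ
      (⟪h' (v + s • d), d⟫ - ⟪h' v, d⟫ - s / μ * ‖d‖ ^ 2) s := by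
    intro s
    have h1 := line_hasDerivAt h h' hd v d s
    have h2 : HasDerivAt (fun s : ℝ => s * ⟪h' v, d⟫) ⟪h' v, d⟫ s := by
      simpa using (hasDerivAt_id s).mul_const ⟪h' v, d⟫
    have h3 : HasDerivAt (fun s : ℝ => s ^ 2 / (2 * μ) * ‖d‖ ^ 2)
        (s / μ * ‖d‖ ^ 2) s := by
      have := ((hasDerivAt_pow 2 s).div_const (2 * μ)).mul_const (‖d‖ ^ 2)
      convert this using 1
      case e'_9 =>
        have hμne : μ ≠ 0 := hμ.ne'
        field_simp
        ring
      all_goals rfl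
    exact (h1.sub h2).sub h3
  have hanti : AntitoneOn ψ (Set.Icc 0 1) := by
    apply antitoneOn_of_deriv_nonpos (convex_Icc 0 1)
    · exact fun s _ => ((hψd s).continuousAt).continuousWithinAt
    · exact fun s _ => ((hψd s).differentiableAt).differentiableWithinAt
    · intro s hs
      rw [interior_Icc] at hs
      rw [(hψd s).deriv]
      have hs0 : 0 < s := hs.1
      have hcs : ⟪h' (v + s • d) - h' v, d⟫ ≤ ‖h' (v + s • d) - h' v‖ * ‖d‖ :=
        real_inner_le_norm _ _
      have hl : ‖h' (v + s • d) - h' v‖ ≤ L * (s * ‖d‖) := by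
        have := hlip (v + s • d) v
        simpa [norm_smul, abs_of_pos hs0] using this
      have hinner : ⟪h' (v + s • d), d⟫ - ⟪h' v, d⟫ = ⟪h' (v + s • d) - h' v, d⟫ := by
        rw [inner_sub_left]
      rw [hinner]
      have hLs : L * (s * ‖d‖) * ‖d‖ ≤ s / μ * ‖d‖ ^ 2 := by
        have h9 : L * μ * (s * ‖d‖ ^ 2) ≤ 1 * (s * ‖d‖ ^ 2) :=
          mul_le_mul_of_nonneg_right hLμ (by positivity)
        rw [div_mul_eq_mul_div, le_div_iff₀ hμ]
        nlinarith [h9]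
      nlinarith [norm_nonneg (h' (v + s • d) - h' v), norm_nonneg d]
  have h01 := hanti (Set.mem_Icc.mpr ⟨le_refl 0, zero_le_one⟩)
    (Set.mem_Icc.mpr ⟨zero_le_one, le_refl 1⟩) zero_le_one
  have hv0 : v + (0:ℝ) • d = v := by simp
  have hv1 : v + (1:ℝ) • d = u := by simp [hdd]
  simp only [hψ, hv0, hv1, one_mul, one_pow, zero_mul, zero_pow, pow_two] at h01
  have : h u - ⟪h' v, d⟫ - 1 / (2 * μ) * ‖d‖ ^ 2 ≤ h v := by
    simpa [pow_two] using h01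
  have hμ2 : (0:ℝ) < 2 * μ := by linarith
  have hring : 1 / (2 * μ) * ‖d‖ ^ 2 = ‖d‖ ^ 2 / (2 * μ) := by ring
  linarith [this, hring.le, hring.ge]

lemma norm_combo_sq (a b : E) (s : ℝ) :
    ‖(1 - s) • a + s • b‖ ^ 2
      = (1 - s) * ‖a‖ ^ 2 + s * ‖b‖ ^ 2 - s * (1 - s) * ‖a - b‖ ^ 2 := by
  have hx : ∀ x : E, ‖x‖ ^ 2 = ⟪x, x⟫ := fun x => real_inner_self_eq_norm_sq x |>.symm
  simp only [hx, inner_add_add_self, inner_sub_sub_self, real_inner_smul_left,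
    real_inner_smul_right, real_inner_comm b a]
  ring

lemma fista_identity (T : ℝ) (c s z : E) :
    T * (T - 1) * ‖c - z‖ ^ 2 + T * ‖s - z‖ ^ 2
      = ‖T • z - (T - 1) • c - s‖ ^ 2 + (T - 1) * ‖s - c‖ ^ 2 := by
  have hx : ∀ x : E, ‖x‖ ^ 2 = ⟪x, x⟫ := fun x => real_inner_self_eq_norm_sq x |>.symm
  simp only [hx, inner_sub_sub_self, inner_sub_left, inner_sub_right,
    real_inner_smul_left, real_inner_smul_right, real_inner_comm z c,
    real_inner_comm s c, real_inner_comm s z]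
  ring

lemma strong_min (f : E → ℝ) (hf : ConvexOn ℝ Set.univ f) (a c : E) (μ : ℝ) (hμ : 0 < μ)
    (X : E)
    (hX : ∀ u, f X + ⟪a, X - c⟫ + ‖X - c‖ ^ 2 / (2 * μ)
            ≤ f u + ⟪a, u - c⟫ + ‖u - c‖ ^ 2 / (2 * μ)) (w : E) :
    f X + ⟪a, X - c⟫ + ‖X - c‖ ^ 2 / (2 * μ) + ‖w - X‖ ^ 2 / (2 * μ)
      ≤ f w + ⟪a, w - c⟫ + ‖w - c‖ ^ 2 / (2 * μ) := by
  set ψ : E → ℝ := fun u => f u + ⟪a, u - c⟫ + ‖u - c‖ ^ 2 / (2 * μ) with hψ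
  set B : ℝ := ‖w - X‖ ^ 2 / (2 * μ) with hB
  have hB0 : 0 ≤ B := by positivity
  have hmain : ∀ s : ℝ, s ∈ Set.Ioc (0:ℝ) 1 → ψ X + B ≤ ψ w + s * B := by
    intro s hs
    set u := (1 - s) • X + s • w with hu
    have hfu : f u ≤ (1 - s) * f X + s * f w := by
      have := hf.2 (Set.mem_univ X) (Set.mem_univ w)
        (by linarith [hs.2] : (0:ℝ) ≤ 1 - s) hs.1.le (by ring)
      simpa [smul_eq_mul] using this
    have huc : u - c = (1 - s) • (X - c) + s • (w - c) := by
      rw [hu]; module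
    have hnorm : ‖u - c‖ ^ 2 = (1 - s) * ‖X - c‖ ^ 2 + s * ‖w - c‖ ^ 2
        - s * (1 - s) * ‖X - w‖ ^ 2 := by
      rw [huc]
      have := norm_combo_sq (X - c) (w - c) s
      simpa using this
    have hinner : ⟪a, u - c⟫ = (1 - s) * ⟪a, X - c⟫ + s * ⟪a, w - c⟫ := by
      rw [huc, inner_add_right, real_inner_smul_right, real_inner_smul_right]
    have hXu := hX u
    have hwX : ‖X - w‖ = ‖w - X‖ := norm_sub_rev X w
    have hψu : ψ u ≤ (1 - s) * ψ X + s * ψ w - s * (1 - s) * B := by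
      have hq : ‖u - c‖ ^ 2 / (2 * μ)
          = (1 - s) * (‖X - c‖ ^ 2 / (2 * μ)) + s * (‖w - c‖ ^ 2 / (2 * μ))
            - s * (1 - s) * B := by
        rw [hnorm, hwX, hB]; ring
      simp only [hψ]
      rw [hinner, hq]
      linarith [hfu]
    have h1 : ψ X ≤ ψ u := hXu
    have h2 : ψ X ≤ (1 - s) * ψ X + s * ψ w - s * (1 - s) * B := le_trans h1 hψu
    have hs0 := hs.1
    nlinarith [h2]
  rcases eq_or_lt_of_le hB0 with hB0' | hB0'
  · have := hmain 1 (Set.mem_Ioc.mpr ⟨zero_lt_one, le_refl 1⟩)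
    simp only [hB] at *
    linarith [this, hB0'.symm.le, hB0'.le]
  · have hgoal : ψ X + B ≤ ψ w := by
      refine le_of_forall_pos_le_add (fun ε hε => ?_)
      set s : ℝ := min 1 (ε / B) with hsdef
      have hs1 : s ≤ 1 := min_le_left _ _
      have hs0 : 0 < s := lt_min zero_lt_one (div_pos hε hB0')
      have := hmain s (Set.mem_Ioc.mpr ⟨hs0, hs1⟩)
      have hsB : s * B ≤ ε := by
        have : s ≤ ε / B := min_le_right _ _
        calc s * B ≤ (ε / B) * B := by nlinarith [hB0'.le]
        _ = ε := by field_simp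
      linarith
    exact hgoal

lemma step_ineq (f g : E → ℝ) (g' : E → E)
    (hfc : ConvexOn ℝ Set.univ f) (hgc : ConvexOn ℝ Set.univ g)
    (hgd : ∀ x, HasGradientAt g (g' x) x)
    (L μ : ℝ) (hμ : 0 < μ) (hLμ : L * μ ≤ 1)
    (hlip : ∀ a b, ‖g' a - g' b‖ ≤ L * ‖a - b‖)
    (Z X : E)
    (hmin : ∀ u, f X + ⟪g' Z, X - Z⟫ + ‖X - Z‖ ^ 2 / (2 * μ)
             ≤ f u + ⟪g' Z, u - Z⟫ + ‖u - Z‖ ^ 2 / (2 * μ))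
    (w : E) :
    f X + g X + ‖w - X‖ ^ 2 / (2 * μ) ≤ f w + g w + ‖w - Z‖ ^ 2 / (2 * μ) := by
  have h1 := strong_min f hfc (g' Z) Z μ hμ X hmin w
  have h2 : g X ≤ g Z + ⟪g' Z, X - Z⟫ + ‖X - Z‖ ^ 2 / (2 * μ) :=
    descent_lemma g g' hgd L μ hμ hLμ hlip X Z
  have h3 : g Z + ⟪g' Z, w - Z⟫ ≤ g w := convex_first_order g g' hgc hgd Z w
  linarith

lemma clear_denom {μ A B C D : ℝ} (hμ : 0 < μ) (h : A + C / (2 * μ) ≤ B + D / (2 * μ)) :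
    2 * μ * A + C ≤ 2 * μ * B + D := by
  have h2 := mul_le_mul_of_nonneg_left h (by linarith : (0:ℝ) ≤ 2 * μ)
  have hne : (2 * μ) ≠ 0 := by positivity
  have e1 : 2 * μ * (A + C / (2 * μ)) = 2 * μ * A + C := by field_simp
  have e2 : 2 * μ * (B + D / (2 * μ)) = 2 * μ * B + D := by field_simp
  rw [e1, e2] at h2; exact h2

lemma fista_combine {μ T tk2 FY FC FS n1 n2 n3 n4 q mk mk1 : ℝ}
    (hTT : 0 ≤ T * (T - 1)) (hT : 0 ≤ T)
    (hrec : T ^ 2 - T = tk2)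
    (i1 : 4 * μ * FY + n1 ≤ 4 * μ * FC + n2)
    (i2 : 4 * μ * FY + n3 ≤ 4 * μ * FS + n4)
    (id1 : T * (T - 1) * n2 + T * n4 = mk + (T - 1) * q)
    (id2 : T * (T - 1) * n1 + T * n3 = mk1 + (T - 1) * q) :
    4 * μ * T ^ 2 * (FY - FS) + mk1 ≤ 4 * μ * tk2 * (FC - FS) + mk := by
  subst hrec
  have m1 := mul_le_mul_of_nonneg_left i1 hTT
  have m2 := mul_le_mul_of_nonneg_left i2 hT
  linarith [m1, m2, id1, id2]

set_option maxHeartbeats 2000000 in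
/-- Convergence rate of the fast alternating linearization method (FALM) when both `f` and `g`
are smooth with Lipschitz gradients and `μ ≤ min{1/L(f), 1/L(g)}`. -/
theorem falm_rate {n : ℕ}
    (f g : EuclideanSpace ℝ (Fin n) → ℝ)
    (f' g' : EuclideanSpace ℝ (Fin n) → EuclideanSpace ℝ (Fin n))
    (hf : ConvexOn ℝ Set.univ f) (hg : ConvexOn ℝ Set.univ g)
    (hf' : ∀ x, HasGradientAt f (f' x) x) (hg' : ∀ x, HasGradientAt g (g' x) x)
    (Lf Lg μ : ℝ) (hLf : 0 < Lf) (hLg : 0 < Lg)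
    (hlipf : ∀ a b, ‖f' a - f' b‖ ≤ Lf * ‖a - b‖)
    (hlipg : ∀ a b, ‖g' a - g' b‖ ≤ Lg * ‖a - b‖)
    (hμ0 : 0 < μ) (hμ : μ ≤ min (1 / Lf) (1 / Lg))
    (Qf Qg : EuclideanSpace ℝ (Fin n) → EuclideanSpace ℝ (Fin n) → ℝ)
    (hQf : ∀ u v, Qf u v = g u + f v + ⟪f' v, u - v⟫ + ‖u - v‖ ^ 2 / (2 * μ))
    (hQg : ∀ u v, Qg u v = f u + g v + ⟪g' v, u - v⟫ + ‖u - v‖ ^ 2 / (2 * μ))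
    -- FALM iterates: z¹ = x⁰ = y⁰, t₁ = 1
    (x y z : ℕ → EuclideanSpace ℝ (Fin n)) (t : ℕ → ℝ)
    (hx0 : x 0 = y 0) (hz1 : z 1 = x 0) (ht1 : t 1 = 1)
    (hx : ∀ k : ℕ, 1 ≤ k → ∀ w, Qg (x k) (z k) ≤ Qg w (z k))
    (hy : ∀ k : ℕ, 1 ≤ k → ∀ w, Qf (y k) (x k) ≤ Qf w (x k))
    (ht : ∀ k : ℕ, 1 ≤ k → t (k + 1) = (1 + Real.sqrt (1 + 4 * (t k) ^ 2)) / 2)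
    (hz : ∀ k : ℕ, 1 ≤ k →
      z (k + 1) = y k + ((t k - 1) / t (k + 1)) • (y k - y (k - 1)))
    (xstar : EuclideanSpace ℝ (Fin n)) (hstar : ∀ w, f xstar + g xstar ≤ f w + g w) :
    ∀ k : ℕ, 1 ≤ k →
      f (y k) + g (y k) - (f xstar + g xstar) ≤
        ‖x 0 - xstar‖ ^ 2 / (μ * ((k : ℝ) + 1) ^ 2) := by
  have hLgμ : Lg * μ ≤ 1 := by
    have h1 : μ ≤ 1 / Lg := le_trans hμ (min_le_right _ _)
    rw [le_div_iff₀ hLg] at h1; linarith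
  have hLfμ : Lf * μ ≤ 1 := by
    have h1 : μ ≤ 1 / Lf := le_trans hμ (min_le_left _ _)
    rw [le_div_iff₀ hLf] at h1; linarith
  -- step inequality for the x-step
  have hA : ∀ k : ℕ, 1 ≤ k → ∀ w,
      f (x k) + g (x k) + ‖w - x k‖ ^ 2 / (2 * μ)
        ≤ f w + g w + ‖w - z k‖ ^ 2 / (2 * μ) := by
    intro k hk w
    refine step_ineq f g g' hf hg hg' Lg μ hμ0 hLgμ hlipg (z k) (x k) ?_ w
    intro u
    have := hx k hk u
    rw [hQg, hQg] at this
    linarith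
  -- step inequality for the y-step
  have hB : ∀ k : ℕ, 1 ≤ k → ∀ w,
      g (y k) + f (y k) + ‖w - y k‖ ^ 2 / (2 * μ)
        ≤ g w + f w + ‖w - x k‖ ^ 2 / (2 * μ) := by
    intro k hk w
    refine step_ineq g f f' hg hf hf' Lf μ hμ0 hLfμ hlipf (x k) (y k) ?_ w
    intro u
    have := hy k hk u
    rw [hQf, hQf] at this
    linarith
  -- F(y k) ≤ F(x k)
  have hFyx : ∀ k : ℕ, 1 ≤ k → f (y k) + g (y k) ≤ f (x k) + g (x k) := by
    intro k hk
    have h1 := hy k hk (x k)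
    rw [hQf, hQf] at h1
    simp only [sub_self, inner_zero_right, norm_zero] at h1
    have h2 : f (y k) ≤ f (x k) + ⟪f' (x k), y k - x k⟫ + ‖y k - x k‖ ^ 2 / (2 * μ) :=
      descent_lemma f f' hf' Lf μ hμ0 hLfμ hlipf (y k) (x k)
    have h3 : (0:ℝ) ^ 2 / (2 * μ) = 0 := by
      rw [zero_pow (by norm_num : 2 ≠ 0)]; simp
    rw [h3] at h1
    linarith
  -- key inequality
  have key : ∀ k : ℕ, 1 ≤ k → ∀ w,
      4 * μ * (f (y k) + g (y k)) + ‖w - y k‖ ^ 2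
        ≤ 4 * μ * (f w + g w) + ‖w - z k‖ ^ 2 := by
    intro k hk w
    have a2 := clear_denom hμ0 (hA k hk w)
    have b2 := clear_denom hμ0 (hB k hk w)
    have c := hFyx k hk
    nlinarith [mul_le_mul_of_nonneg_left c (by linarith : (0:ℝ) ≤ 2 * μ)]
  -- properties of t
  have tlow : ∀ k : ℕ, 1 ≤ k → ((k : ℝ) + 1) / 2 ≤ t k := by
    intro k hk
    induction k, hk using Nat.le_induction with
    | base => rw [ht1]; norm_num
    | succ k hk ih =>
      have htk : (0:ℝ) ≤ t k := by
        have : (1:ℝ) ≤ ((k:ℝ) + 1) / 2 + 1 := by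
          have : (1:ℝ) ≤ (k:ℝ) := by exact_mod_cast hk
          linarith
        linarith [ih]
      have hsq : Real.sqrt (4 * (t k) ^ 2) = 2 * t k := by
        rw [show (4:ℝ) * (t k) ^ 2 = (2 * t k) ^ 2 by ring]
        exact Real.sqrt_sq (by linarith)
      have hmono : Real.sqrt (4 * (t k) ^ 2) ≤ Real.sqrt (1 + 4 * (t k) ^ 2) :=
        Real.sqrt_le_sqrt (by linarith)
      rw [ht k hk]
      rw [hsq] at hmono
      push_cast
      linarith [ih]
  have tpos : ∀ k : ℕ, 1 ≤ k → 1 ≤ t k := by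
    intro k hk
    have h1 := tlow k hk
    have : (1:ℝ) ≤ (k:ℝ) := by exact_mod_cast hk
    linarith
  have trec : ∀ k : ℕ, 1 ≤ k → (t (k + 1)) ^ 2 - t (k + 1) = (t k) ^ 2 := by
    intro k hk
    have hs := Real.sq_sqrt (by positivity : (0:ℝ) ≤ 1 + 4 * (t k) ^ 2)
    rw [ht k hk]
    linear_combination hs / 4
  -- FISTA potential
  set u : ℕ → EuclideanSpace ℝ (Fin n) :=
    fun k => t k • y k - (t k - 1) • y (k - 1) - xstar with hu
  set Φ : ℕ → ℝ :=
    fun k => 4 * μ * (t k) ^ 2 * (f (y k) + g (y k) - (f xstar + g xstar)) + ‖u k‖ ^ 2 with hΦ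
  have base : Φ 1 ≤ ‖x 0 - xstar‖ ^ 2 := by
    have hk := key 1 le_rfl xstar
    rw [hz1] at hk
    have hu1 : u 1 = y 1 - xstar := by
      simp [hu, ht1]
    have hn1 : ‖xstar - y 1‖ = ‖y 1 - xstar‖ := norm_sub_rev _ _
    have hn2 : ‖xstar - x 0‖ = ‖x 0 - xstar‖ := norm_sub_rev _ _
    simp only [hΦ, hu1, ht1, one_pow]
    rw [← hn1, ← hn2]
    linarith [hk]
  have step : ∀ k : ℕ, 1 ≤ k → Φ (k + 1) ≤ Φ k := by
    intro k hk
    have hk1 : 1 ≤ k + 1 := by omega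
    have hT1 : 1 ≤ t (k + 1) := tpos (k + 1) hk1
    have hTpos : 0 < t (k + 1) := by linarith
    have hTne : t (k + 1) ≠ 0 := ne_of_gt hTpos
    have hrec := trec k hk
    -- key at y k and xstar
    have i1 := key (k + 1) hk1 (y k)
    have i2 := key (k + 1) hk1 xstar
    -- z-relation
    have zrel : t (k + 1) • z (k + 1) - (t (k + 1) - 1) • y k - xstar = u k := by
      have h5 : t (k + 1) • z (k + 1)
          = t (k + 1) • y k + (t k - 1) • (y k - y (k - 1)) := by
        rw [hz k hk, smul_add, smul_smul, mul_div_cancel₀ _ hTne]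
      rw [h5, hu]
      simp only []
      module
    have uk1 : t (k + 1) • y (k + 1) - (t (k + 1) - 1) • y k - xstar = u (k + 1) := by
      simp [hu]
    have id1 := fista_identity (t (k + 1)) (y k) xstar (z (k + 1))
    have id2 := fista_identity (t (k + 1)) (y k) xstar (y (k + 1))
    rw [zrel] at id1
    rw [uk1] at id2
    have hTT : (0:ℝ) ≤ t (k + 1) * (t (k + 1) - 1) := by nlinarith
    simp only [hΦ]
    exact fista_combine hTT hTpos.le hrec i1 i2 id1 id2
  have mono : ∀ k : ℕ, 1 ≤ k → Φ k ≤ ‖x 0 - xstar‖ ^ 2 := by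
    intro k hk
    induction k, hk using Nat.le_induction with
    | base => exact base
    | succ k hk ih => exact le_trans (step k hk) ih
  -- conclusion
  intro k hk
  have hΦk := mono k hk
  have hv : 0 ≤ f (y k) + g (y k) - (f xstar + g xstar) := by
    have := hstar (y k); linarith
  have htk := tlow k hk
  have hk1 : (1:ℝ) ≤ (k:ℝ) := by exact_mod_cast hk
  have hkpos : (0:ℝ) < ((k:ℝ) + 1) ^ 2 := by positivity
  have hnn : 0 ≤ ‖u k‖ ^ 2 := sq_nonneg _
  have htsq : (((k:ℝ) + 1) / 2) ^ 2 ≤ (t k) ^ 2 := by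
    have h0 : (0:ℝ) ≤ ((k:ℝ) + 1) / 2 := by positivity
    exact pow_le_pow_left₀ h0 htk 2
  have hlhs : μ * ((k:ℝ) + 1) ^ 2 * (f (y k) + g (y k) - (f xstar + g xstar))
      ≤ 4 * μ * (t k) ^ 2 * (f (y k) + g (y k) - (f xstar + g xstar)) := by
    have h6 : μ * ((k:ℝ) + 1) ^ 2 ≤ 4 * μ * (t k) ^ 2 := by nlinarith [htsq, hμ0.le]
    exact mul_le_mul_of_nonneg_right h6 hv
  rw [le_div_iff₀ (by positivity : (0:ℝ) < μ * ((k:ℝ) + 1) ^ 2)]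
  simp only [hΦ] at hΦk
  linarith [hlhs, hΦk, hnn]
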